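/- The canonical binary-expansion surjection φ : {0,1}^ℕ → [0,1] (with {0,1}^ℕ in the lexicographic order) preserves all suprema and all infima, and hence has a lower adjoint j : [0,1] → {0,1}^ℕ satisfying φ(j(r)) = r for all r ∈ [0,1] and j(r) ≤ a ⟺ r ≤ φ(a). -/

import Mathlib

/-- The canonical binary-expansion map `{0,1}^ℕ → [0,1]`. -/
noncomputable def cantorPhi (a : ℕ → Bool) : ℝ :=
  ∑' n : ℕ, if a n then (1 / 2 : ℝ) ^ (n + 1) else 0

/-- The lexicographic order on `{0,1}^ℕ` (with `false < true`). -/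
def lexLe (a b : ℕ → Bool) : Prop :=
  a = b ∨ ∃ n : ℕ, a n < b n ∧ ∀ i < n, a i = b i

/-- Least upper bound with respect to an explicit relation. -/
def IsLubRel {α : Type*} (le : α → α → Prop) (S : Set α) (m : α) : Prop :=
  (∀ s ∈ S, le s m) ∧ ∀ b : α, (∀ s ∈ S, le s b) → le m b

/-- Greatest lower bound with respect to an explicit relation. -/
def IsGlbRel {α : Type*} (le : α → α → Prop) (S : Set α) (m : α) : Prop :=
  (∀ s ∈ S, le m s) ∧ ∀ b : α, (∀ s ∈ S, le b s) → le b m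

namespace CantorAux

noncomputable def trm (a : ℕ → Bool) (n : ℕ) : ℝ := if a n then (1/2:ℝ)^(n+1) else 0

lemma trm_nonneg (a : ℕ → Bool) (n : ℕ) : 0 ≤ trm a n := by
  unfold trm; split
  · positivity
  · exact le_rfl

lemma trm_le (a : ℕ → Bool) (n : ℕ) : trm a n ≤ (1/2:ℝ)^(n+1) := by
  unfold trm; split
  · exact le_rfl
  · positivity

lemma bool_cases {x y : Bool} (h : x ≠ y) :
    (x = false ∧ y = true) ∨ (x = true ∧ y = false) := by
  cases x <;> cases y <;> simp_all

lemma summable_geo : Summable (fun n : ℕ => (1/2:ℝ)^(n+1)) := by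
  have h : Summable (fun n : ℕ => (1/2:ℝ)^n) :=
    summable_geometric_of_lt_one (by norm_num) (by norm_num)
  simpa [pow_succ, mul_comm] using h.mul_left (1/2:ℝ)

lemma summable_trm (a : ℕ → Bool) : Summable (trm a) :=
  Summable.of_nonneg_of_le (trm_nonneg a) (trm_le a) summable_geo

lemma cantorPhi_eq (a : ℕ → Bool) : cantorPhi a = ∑' n, trm a n := rfl

noncomputable def psum (a : ℕ → Bool) (n : ℕ) : ℝ := ∑ k ∈ Finset.range n, trm a k

lemma psum_succ (a : ℕ → Bool) (n : ℕ) : psum a (n+1) = psum a n + trm a n := by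
  simp [psum, Finset.sum_range_succ]

lemma psum_congr {a b : ℕ → Bool} {n : ℕ} (h : ∀ i < n, a i = b i) :
    psum a n = psum b n := by
  unfold psum
  refine Finset.sum_congr rfl fun i hi => ?_
  rw [Finset.mem_range] at hi
  simp [trm, h i hi]

lemma tail_nonneg (a : ℕ → Bool) (n : ℕ) : 0 ≤ ∑' k, trm a (k + n) :=
  tsum_nonneg fun k => trm_nonneg a _

lemma tsum_geo_shift (n : ℕ) : ∑' k : ℕ, (1/2:ℝ)^(k + n + 1) = (1/2:ℝ)^n := by
  have h : ∀ k : ℕ, (1/2:ℝ)^(k + n + 1) = (1/2:ℝ)^(n+1) * (1/2)^k := by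
    intro k; rw [← pow_add]; ring_nf
  rw [tsum_congr h, tsum_mul_left, tsum_geometric_of_lt_one (by norm_num) (by norm_num)]
  rw [show ((1:ℝ) - 1/2)⁻¹ = 2 by norm_num, pow_succ]
  ring

lemma tail_le (a : ℕ → Bool) (n : ℕ) : ∑' k, trm a (k + n) ≤ (1/2:ℝ)^n := by
  calc ∑' k, trm a (k + n) ≤ ∑' k : ℕ, (1/2:ℝ)^(k + n + 1) := by
        refine Summable.tsum_le_tsum (fun k => trm_le a _) ((summable_trm a).comp_injective
          (add_left_injective n)) ?_
        have := summable_geo.comp_injective (add_left_injective n)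
        exact this
    _ = (1/2:ℝ)^n := tsum_geo_shift n

lemma split (a : ℕ → Bool) (n : ℕ) :
    cantorPhi a = psum a n + ∑' k, trm a (k + n) := by
  rw [cantorPhi_eq, ← Summable.sum_add_tsum_nat_add n (summable_trm a)]
  rfl

lemma psum_le_phi (a : ℕ → Bool) (n : ℕ) : psum a n ≤ cantorPhi a := by
  rw [split a n]
  linarith [tail_nonneg a n]

lemma phi_le_psum (a : ℕ → Bool) (n : ℕ) : cantorPhi a ≤ psum a n + (1/2:ℝ)^n := by
  rw [split a n]
  linarith [tail_le a n]

lemma phi_nonneg (a : ℕ → Bool) : 0 ≤ cantorPhi a := by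
  have := psum_le_phi a 0
  simpa [psum] using this

lemma phi_le_one (a : ℕ → Bool) : cantorPhi a ≤ 1 := by
  have := phi_le_psum a 0
  simpa [psum] using this

lemma le_phi_of_true {a : ℕ → Bool} {n : ℕ} (h : a n = true) :
    psum a n + (1/2:ℝ)^(n+1) ≤ cantorPhi a := by
  have := psum_le_phi a (n+1)
  rw [psum_succ] at this
  simpa [trm, h] using this

lemma phi_le_of_false {a : ℕ → Bool} {n : ℕ} (h : a n = false) :
    cantorPhi a ≤ psum a n + (1/2:ℝ)^(n+1) := by
  have := phi_le_psum a (n+1)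
  rw [psum_succ] at this
  simpa [trm, h] using this

lemma phi_mono {a b : ℕ → Bool} (h : lexLe a b) : cantorPhi a ≤ cantorPhi b := by
  rcases h with rfl | ⟨n, hn, hpre⟩
  · exact le_refl _
  · have hab : a n = false ∧ b n = true := by
      revert hn; cases a n <;> cases b n <;> simp
    calc cantorPhi a ≤ psum a n + (1/2:ℝ)^(n+1) := phi_le_of_false hab.1
      _ = psum b n + (1/2:ℝ)^(n+1) := by rw [psum_congr hpre]
      _ ≤ cantorPhi b := le_phi_of_true hab.2

/-! ### The lower adjoint `j` (greedy expansion with strict comparison) -/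

noncomputable def rem (r : ℝ) : ℕ → ℝ
  | 0 => r
  | n+1 => if (1/2:ℝ)^(n+1) < rem r n then rem r n - (1/2:ℝ)^(n+1) else rem r n

noncomputable def jfun (r : ℝ) (n : ℕ) : Bool := decide ((1/2:ℝ)^(n+1) < rem r n)

lemma jfun_true {r : ℝ} {n : ℕ} : jfun r n = true ↔ (1/2:ℝ)^(n+1) < rem r n := by
  simp [jfun]

lemma rem_eq (r : ℝ) (n : ℕ) : rem r n = r - psum (jfun r) n := by
  induction n with
  | zero => simp [rem, psum]
  | succ n ih =>
    rw [rem, psum_succ]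
    by_cases h : (1/2:ℝ)^(n+1) < rem r n
    · rw [if_pos h, ih]
      have hj : jfun r n = true := jfun_true.mpr h
      simp only [trm, hj, if_true]
      ring
    · rw [if_neg h, ih]
      have hj : jfun r n = false := by unfold jfun; exact decide_eq_false h
      simp [trm, hj]

lemma rem_nonneg {r : ℝ} (hr : 0 ≤ r) (n : ℕ) : 0 ≤ rem r n := by
  induction n with
  | zero => simpa [rem] using hr
  | succ n ih =>
    rw [rem]
    split
    · linarith
    · exact ih

lemma rem_le {r : ℝ} (hr : r ≤ 1) (n : ℕ) : rem r n ≤ (1/2:ℝ)^n := by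
  induction n with
  | zero => simpa [rem] using hr
  | succ n ih =>
    rw [rem]
    split
    · have : (1/2:ℝ)^(n+1) = (1/2:ℝ)^n / 2 := by rw [pow_succ]; ring
      rw [this] at *
      linarith
    · linarith [not_lt.mp (by assumption : ¬ (1/2:ℝ)^(n+1) < rem r n)]

lemma phi_jfun {r : ℝ} (hr : r ∈ Set.Icc (0:ℝ) 1) : cantorPhi (jfun r) = r := by
  have key : ∀ n : ℕ, |cantorPhi (jfun r) - r| ≤ (1/2:ℝ)^n := by
    intro n
    rw [abs_le]
    have h1 := psum_le_phi (jfun r) n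
    have h2 := phi_le_psum (jfun r) n
    have h3 := rem_eq r n
    have h4 := rem_nonneg hr.1 n
    have h5 := rem_le hr.2 n
    constructor <;> linarith
  have hz : |cantorPhi (jfun r) - r| ≤ 0 := by
    refine ge_of_tendsto' (tendsto_pow_atTop_nhds_zero_of_lt_one (by norm_num) (by norm_num)) key
  have := abs_nonneg (cantorPhi (jfun r) - r)
  have : cantorPhi (jfun r) - r = 0 := abs_eq_zero.mp (le_antisymm hz this)
  linarith

lemma jfun_adjoint {r : ℝ} (hr : r ∈ Set.Icc (0:ℝ) 1) (a : ℕ → Bool) :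
    lexLe (jfun r) a ↔ r ≤ cantorPhi a := by
  constructor
  · intro h
    have := phi_mono h
    rw [phi_jfun hr] at this
    exact this
  · intro hra
    by_cases heq : jfun r = a
    · exact Or.inl heq
    have hex : ∃ n, jfun r n ≠ a n := by
      by_contra hc
      push_neg at hc
      exact heq (funext hc)
    classical
    set n := Nat.find hex with hn
    have hne : jfun r n ≠ a n := Nat.find_spec hex
    have hpre : ∀ i < n, jfun r i = a i := fun i hi => by
      have := Nat.find_min hex hi
      simpa using this
    rcases bool_cases hne with ⟨hj, ha⟩ | ⟨hj, ha⟩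
    · refine Or.inr ⟨n, ?_, hpre⟩
      rw [hj, ha]; exact Bool.false_lt_true
    · exfalso
      have h1 : (1/2:ℝ)^(n+1) < rem r n := jfun_true.mp hj
      rw [rem_eq] at h1
      have h2 : cantorPhi a ≤ psum a n + (1/2:ℝ)^(n+1) := phi_le_of_false ha
      rw [← psum_congr hpre] at h2
      linarith

/-! ### The upper adjoint `g` (greedy expansion with non-strict comparison) -/

noncomputable def gem (b : ℝ) : ℕ → ℝ
  | 0 => b
  | n+1 => if (1/2:ℝ)^(n+1) ≤ gem b n then gem b n - (1/2:ℝ)^(n+1) else gem b n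

noncomputable def gfun (b : ℝ) (n : ℕ) : Bool := decide ((1/2:ℝ)^(n+1) ≤ gem b n)

lemma gfun_true {b : ℝ} {n : ℕ} : gfun b n = true ↔ (1/2:ℝ)^(n+1) ≤ gem b n := by
  simp [gfun]

lemma gem_eq (b : ℝ) (n : ℕ) : gem b n = b - psum (gfun b) n := by
  induction n with
  | zero => simp [gem, psum]
  | succ n ih =>
    rw [gem, psum_succ]
    by_cases h : (1/2:ℝ)^(n+1) ≤ gem b n
    · rw [if_pos h, ih]
      have hg : gfun b n = true := gfun_true.mpr h
      simp only [trm, hg, if_true]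
      ring
    · rw [if_neg h, ih]
      have hg : gfun b n = false := by unfold gfun; exact decide_eq_false h
      simp [trm, hg]

lemma gem_nonneg {b : ℝ} (hb : 0 ≤ b) (n : ℕ) : 0 ≤ gem b n := by
  induction n with
  | zero => simpa [gem] using hb
  | succ n ih =>
    rw [gem]
    split
    · linarith [(by assumption : (1/2:ℝ)^(n+1) ≤ gem b n)]
    · exact ih

lemma phi_gfun_le {b : ℝ} (hb : 0 ≤ b) : cantorPhi (gfun b) ≤ b := by
  have key : ∀ n : ℕ, cantorPhi (gfun b) ≤ b + (1/2:ℝ)^n := by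
    intro n
    have h2 := phi_le_psum (gfun b) n
    have h3 := gem_eq b n
    have h4 := gem_nonneg hb n
    linarith
  have h0 : Filter.Tendsto (fun n : ℕ => (1/2:ℝ)^n) Filter.atTop (nhds 0) :=
    tendsto_pow_atTop_nhds_zero_of_lt_one (by norm_num) (by norm_num)
  have htend : Filter.Tendsto (fun n : ℕ => b + (1/2:ℝ)^n) Filter.atTop (nhds b) := by
    simpa using (tendsto_const_nhds (x := b) (f := Filter.atTop)).add h0
  exact ge_of_tendsto' htend key

lemma gfun_adjoint_left {b : ℝ} {a : ℕ → Bool} (hab : cantorPhi a ≤ b) :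
    lexLe a (gfun b) := by
  by_cases heq : a = gfun b
  · exact Or.inl heq
  have hex : ∃ n, a n ≠ gfun b n := by
    by_contra hc
    push_neg at hc
    exact heq (funext hc)
  classical
  set n := Nat.find hex with hn
  have hne : a n ≠ gfun b n := Nat.find_spec hex
  have hpre : ∀ i < n, a i = gfun b i := fun i hi => by
    have := Nat.find_min hex hi
    simpa using this
  rcases bool_cases hne with ⟨ha, hg⟩ | ⟨ha, hg⟩
  · refine Or.inr ⟨n, ?_, hpre⟩
    rw [ha, hg]; exact Bool.false_lt_true
  · exfalso
    have h1 : ¬ (1/2:ℝ)^(n+1) ≤ gem b n := by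
      intro h
      rw [← gfun_true] at h
      rw [h] at hg
      exact Bool.noConfusion hg
    push_neg at h1
    rw [gem_eq] at h1
    have h2 : psum a n + (1/2:ℝ)^(n+1) ≤ cantorPhi a := le_phi_of_true ha
    rw [psum_congr hpre] at h2
    linarith

end CantorAux

open CantorAux in
/-- The binary-expansion surjection `φ : {0,1}^ℕ → [0,1]` (lexicographic order on the
source) preserves all suprema and all infima, and has a lower adjoint
`j : [0,1] → {0,1}^ℕ` with `φ(j r) = r` and `j r ≤ a ⟺ r ≤ φ a`. -/
theorem stmt15 :
    (∀ S : Set (ℕ → Bool), S.Nonempty → ∀ m : ℕ → Bool,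
      IsLubRel lexLe S m → IsLUB (cantorPhi '' S) (cantorPhi m)) ∧
    (∀ S : Set (ℕ → Bool), S.Nonempty → ∀ m : ℕ → Bool,
      IsGlbRel lexLe S m → IsGLB (cantorPhi '' S) (cantorPhi m)) ∧
    ∃ j : ℝ → (ℕ → Bool), ∀ r ∈ Set.Icc (0:ℝ) 1,
      cantorPhi (j r) = r ∧ ∀ a : ℕ → Bool, (lexLe (j r) a ↔ r ≤ cantorPhi a) := by
  refine ⟨?_, ?_, ⟨jfun, fun r hr => ⟨phi_jfun hr, fun a => jfun_adjoint hr a⟩⟩⟩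
  · -- suprema
    intro S hS m hm
    constructor
    · rintro x ⟨s, hs, rfl⟩
      exact phi_mono (hm.1 s hs)
    · intro b hb
      obtain ⟨s0, hs0⟩ := hS
      have hb0 : 0 ≤ b := le_trans (phi_nonneg s0) (hb ⟨s0, hs0, rfl⟩)
      have hub : ∀ s ∈ S, lexLe s (gfun b) := fun s hs =>
        gfun_adjoint_left (hb ⟨s, hs, rfl⟩)
      have := phi_mono (hm.2 (gfun b) hub)
      exact le_trans this (phi_gfun_le hb0)
  · -- infima
    intro S hS m hm
    constructor
    · rintro x ⟨s, hs, rfl⟩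
      exact phi_mono (hm.1 s hs)
    · intro b hb
      obtain ⟨s0, hs0⟩ := hS
      by_cases hb0 : b ≤ 0
      · exact le_trans hb0 (phi_nonneg m)
      push_neg at hb0
      have hb1 : b ≤ 1 := le_trans (hb ⟨s0, hs0, rfl⟩) (phi_le_one s0)
      have hbI : b ∈ Set.Icc (0:ℝ) 1 := ⟨le_of_lt hb0, hb1⟩
      have hlb : ∀ s ∈ S, lexLe (jfun b) s := fun s hs =>
        (jfun_adjoint hbI s).mpr (hb ⟨s, hs, rfl⟩)
      have := phi_mono (hm.2 (jfun b) hlb)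
      rw [phi_jfun hbI] at this
      exact this
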